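/- Let c, A, B ∈ ℝ with c > 0, and let h : ℝ → ℝ be C² with h'(s) → 0 and h(s)/s → 0 as s → ∞. Suppose s·H(s) → L as s → ∞, where H(s) := h''(s) + (2cs + A h(s) + B)h'(s). Then s²·h'(s) → L/(2c) as s → ∞. -/

import Mathlib

open Filter Real

/-- Trap lemma: if `v` has derivative `vd`, and `vd s ≤ -κ` whenever `v s ≥ ε` (for `s ≥ s₀`),
then eventually `v s ≤ ε`. -/
lemma trap_lemma {v vd : ℝ → ℝ} {s₀ ε κ : ℝ} (hκ : 0 < κ)
    (hv : ∀ s, s₀ ≤ s → HasDerivAt v (vd s) s)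
    (hd : ∀ s, s₀ ≤ s → ε ≤ v s → vd s ≤ -κ) :
    ∀ᶠ s in atTop, v s ≤ ε := by
  have hcont : ContinuousOn v (Set.Ici s₀) := fun x hx =>
    (hv x hx).continuousAt.continuousWithinAt
  -- Step 1: v drops below ε at some point
  have step1 : ∃ s₁, s₀ ≤ s₁ ∧ v s₁ < ε := by
    by_contra hcon
    push_neg at hcon
    have hall : ∀ s, s₀ ≤ s → ε ≤ v s := fun s hs => hcon s hs
    have hanti : AntitoneOn (fun s => v s + κ * s) (Set.Ici s₀) := by
      have hder : ∀ x, s₀ ≤ x → HasDerivAt (fun s => v s + κ * s) (vd x + κ * 1) x :=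
        fun x hx => (hv x hx).add ((hasDerivAt_id x).const_mul κ)
      apply antitoneOn_of_deriv_nonpos (convex_Ici s₀)
      · exact hcont.add (continuous_const.mul continuous_id).continuousOn
      · intro x hx
        rw [interior_Ici] at hx
        exact (hder x hx.le).differentiableAt.differentiableWithinAt
      · intro x hx
        rw [interior_Ici] at hx
        rw [(hder x hx.le).deriv]
        have := hd x hx.le (hall x hx.le)
        linarith
    set s₂ := s₀ + (v s₀ - ε) / κ + 1 with hs₂def
    have hge : s₀ ≤ s₂ := by
      have h1 : 0 ≤ (v s₀ - ε) / κ := div_nonneg (by linarith [hall s₀ le_rfl]) hκ.le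
      simp only [hs₂def]; linarith
    have := hanti (Set.self_mem_Ici) hge hge
    simp only at this
    have hkey : κ * ((v s₀ - ε) / κ) = v s₀ - ε := by field_simp
    have := hall s₂ hge
    simp only [hs₂def] at *
    nlinarith
  obtain ⟨s₁, hs₁0, hvs₁⟩ := step1
  -- Step 2: invariance
  filter_upwards [eventually_ge_atTop s₁] with s₂ hs₂
  by_contra h2
  push_neg at h2
  set S : Set ℝ := Set.Icc s₁ s₂ ∩ v ⁻¹' Set.Iic ε with hSdef
  have hS₁ : s₁ ∈ S := ⟨⟨le_refl _, hs₂⟩, le_of_lt hvs₁⟩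
  have hSc : IsClosed S :=
    (hcont.mono (Set.Icc_subset_Ici_self.trans (Set.Ici_subset_Ici.mpr hs₁0))
      |>.preimage_isClosed_of_isClosed isClosed_Icc isClosed_Iic)
  have hbdd : BddAbove S := ⟨s₂, fun t ht => ht.1.2⟩
  set t₀ := sSup S with ht₀def
  have ht₀S : t₀ ∈ S := hSc.csSup_mem ⟨s₁, hS₁⟩ hbdd
  have ht₀le : t₀ ≤ s₂ := ht₀S.1.2
  have ht₀ge : s₁ ≤ t₀ := ht₀S.1.1
  have ht₀lt : t₀ < s₂ := lt_of_le_of_ne ht₀le (by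
    intro heq
    have := ht₀S.2
    rw [heq] at this
    exact absurd this (not_le.mpr h2))
  have hmid : ∀ t, t ∈ Set.Ioc t₀ s₂ → ε < v t := by
    intro t ht
    by_contra hle
    push_neg at hle
    have htS : t ∈ S := ⟨⟨le_trans ht₀ge ht.1.le, ht.2⟩, hle⟩
    exact absurd (le_csSup hbdd htS) (not_le.mpr ht.1)
  have hanti : AntitoneOn v (Set.Icc t₀ s₂) := by
    apply antitoneOn_of_deriv_nonpos (convex_Icc t₀ s₂)
    · exact hcont.mono (fun x hx => le_trans (le_trans hs₁0 ht₀ge) hx.1)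
    · intro x hx
      rw [interior_Icc] at hx
      have hx' : s₀ ≤ x := le_trans (le_trans hs₁0 ht₀ge) hx.1.le
      exact (hv x hx').differentiableAt.differentiableWithinAt
    · intro x hx
      rw [interior_Icc] at hx
      have hx' : s₀ ≤ x := le_trans (le_trans hs₁0 ht₀ge) hx.1.le
      rw [(hv x hx').deriv]
      have := hd x hx' (hmid x ⟨hx.1, hx.2.le⟩).le
      linarith
  have h3 := hanti (Set.left_mem_Icc.mpr ht₀le) (Set.right_mem_Icc.mpr ht₀le) ht₀le
  have h4 : v t₀ ≤ ε := ht₀S.2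
  linarith

lemma aux_ident (c A B L s gs hs Hs : ℝ) (h0 : s ≠ 0) (hc : c ≠ 0) :
    2 * s * gs + s ^ 2 * (Hs - (2 * c * s + A * hs + B) * gs) =
    s * ((s * Hs - L) - (A * (hs / s) + B * s⁻¹ - 2 * (s ^ 2) ⁻¹) * (L / (2 * c)) -
      (2 * c + (A * (hs / s) + B * s⁻¹ - 2 * (s ^ 2)⁻¹)) * (s ^ 2 * gs - L / (2 * c))) := by
  field_simp
  ring

set_option maxHeartbeats 1000000 in
theorem stmt_8 (c A B L : ℝ) (hc : 0 < c) (h H : ℝ → ℝ) (hh : ContDiff ℝ 2 h)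
    (hh' : Tendsto (deriv h) atTop (nhds 0))
    (hhs : Tendsto (fun s => h s / s) atTop (nhds 0))
    (hHdef : ∀ s, H s = deriv (deriv h) s + (2 * c * s + A * h s + B) * deriv h s)
    (hH : Tendsto (fun s => s * H s) atTop (nhds L)) :
    Tendsto (fun s => s ^ 2 * deriv h s) atTop (nhds (L / (2 * c))) := by
  set ℓ := L / (2 * c) with hℓdef
  have hc2 : (2 * c) ≠ 0 := by positivity
  -- deriv h is differentiable
  have hdh2 : Differentiable ℝ (deriv h) := by
    have h2 : ContDiff ℝ (1 + 1) h := by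
      have he : ((1 : WithTop ℕ∞) + 1) = 2 := by norm_num
      rw [he]; exact hh
    exact (contDiff_succ_iff_deriv.mp h2).2.2.differentiable one_ne_zero
  set g := deriv h with hgdef
  set w : ℝ → ℝ := fun s => A * (h s / s) + B * s⁻¹ - 2 * (s ^ 2)⁻¹ with hwdef
  have hw0 : Tendsto w atTop (nhds 0) := by
    have h1 : Tendsto (fun s : ℝ => A * (h s / s)) atTop (nhds (A * 0)) := hhs.const_mul A
    have h2 : Tendsto (fun s : ℝ => B * s⁻¹) atTop (nhds (B * 0)) :=
      tendsto_inv_atTop_zero.const_mul B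
    have h3 : Tendsto (fun s : ℝ => 2 * (s ^ 2)⁻¹) atTop (nhds (2 * 0)) :=
      ((tendsto_pow_atTop (two_ne_zero)).inv_tendsto_atTop).const_mul 2
    have := (h1.add h2).sub h3
    simpa using this
  set v : ℝ → ℝ := fun s => s ^ 2 * g s - ℓ with hvdef
  set vd : ℝ → ℝ := fun s => 2 * s * g s + s ^ 2 * deriv g s with hvddef
  have hvderiv : ∀ s : ℝ, HasDerivAt v (vd s) s := by
    intro s
    have h1 : HasDerivAt (fun x => x ^ 2 * g x)
        ((2 : ℕ) * s ^ (2 - 1) * g s + s ^ 2 * deriv g s) s :=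
      (hasDerivAt_pow 2 s).mul (hdh2 s).hasDerivAt
    have h2 := h1.sub_const ℓ
    exact h2.congr_deriv (by norm_num [hvddef])
  -- key identity
  have hident : ∀ s : ℝ, s ≠ 0 →
      vd s = s * ((s * H s - L) - w s * ℓ - (2 * c + w s) * v s) := by
    intro s hs
    have hd2 : deriv g s = H s - (2 * c * s + A * h s + B) * g s := by
      have := hHdef s
      linarith
    simp only [hvddef, hvdef, hwdef, hℓdef]
    rw [hd2]
    exact aux_ident c A B L s (g s) (h s) (H s) hs (ne_of_gt hc)
  clear_value g w v vd
  clear_value ℓ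
  rw [Metric.tendsto_nhds]
  intro ε hε
  -- choose δ
  set δ := min c (c * ε / (8 * (|ℓ| + 1))) with hδdef
  have hδpos : 0 < δ := by
    apply lt_min hc
    positivity
  have hδc : δ ≤ c := min_le_left _ _
  have hδℓ : δ * (|ℓ| + 1) ≤ c * ε / 8 := by
    have h1 : δ ≤ c * ε / (8 * (|ℓ| + 1)) := min_le_right _ _
    have h2 : (0 : ℝ) < |ℓ| + 1 := by positivity
    calc δ * (|ℓ| + 1) ≤ c * ε / (8 * (|ℓ| + 1)) * (|ℓ| + 1) :=
          mul_le_mul_of_nonneg_right h1 h2.le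
      _ = c * ε / 8 := by field_simp
  clear_value δ
  -- eventual bounds
  have hEv1 : ∀ᶠ s in atTop, |s * H s - L| ≤ c * ε / 8 := by
    have := Metric.tendsto_nhds.mp hH (c * ε / 8) (by positivity)
    filter_upwards [this] with s hs
    rw [Real.dist_eq] at hs
    exact hs.le
  have hEv2 : ∀ᶠ s in atTop, |w s| ≤ δ := by
    have := Metric.tendsto_nhds.mp hw0 δ hδpos
    filter_upwards [this] with s hs
    rw [Real.dist_eq, sub_zero] at hs
    exact hs.le
  have hEv := (hEv1.and hEv2).and (eventually_ge_atTop (1 : ℝ))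
  rw [eventually_atTop] at hEv
  obtain ⟨s₀, hs₀⟩ := hEv
  set s₁ := max s₀ 1 with hs₁def
  have hgood : ∀ s, s₁ ≤ s → |s * H s - L| ≤ c * ε / 8 ∧ |w s| ≤ δ ∧ 1 ≤ s := by
    intro s hs
    have h1 := hs₀ s (le_trans (le_max_left _ _) hs)
    exact ⟨h1.1.1, h1.1.2, le_trans (le_max_right _ _) hs⟩
  clear_value s₁
  set κ := c * ε / 4 with hκdef
  have hκpos : 0 < κ := by positivity
  clear_value κ
  -- upper bound
  have hupper : ∀ᶠ s in atTop, v s ≤ ε / 2 := by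
    apply trap_lemma hκpos (fun s _ => hvderiv s)
    intro s hs hvs
    obtain ⟨hb1, hb2, hb3⟩ := hgood s hs
    have hs0 : s ≠ 0 := by linarith
    rw [hident s hs0]
    rw [abs_le] at hb1 hb2
    have hℓb : |ℓ| ≤ |ℓ| + 1 := by linarith
    have hwℓ : w s * ℓ ≥ -(c * ε / 8) := by
      have h1 : |w s * ℓ| ≤ δ * (|ℓ| + 1) := by
        rw [abs_mul]
        apply mul_le_mul (abs_le.mpr hb2) (by linarith [abs_nonneg ℓ]) (abs_nonneg _)
          hδpos.le
      have := (abs_le.mp (h1.trans hδℓ)).1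
      linarith
    have hqv : (2 * c + w s) * v s ≥ c * (ε / 2) := by
      have h2c : 2 * c + w s ≥ c := by linarith
      have hv2 : v s ≥ ε / 2 := hvs
      have hvpos : (0:ℝ) ≤ v s := le_trans (by linarith) hvs
      have hwc : (0:ℝ) ≤ 2 * c + w s - c := by linarith
      nlinarith [mul_nonneg hwc hvpos, mul_le_mul_of_nonneg_left hv2 hc.le]
    have hinner : (s * H s - L) - w s * ℓ - (2 * c + w s) * v s ≤ -κ := by
      simp only [hκdef]
      linarith
    calc s * ((s * H s - L) - w s * ℓ - (2 * c + w s) * v s) ≤ s * (-κ) :=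
          mul_le_mul_of_nonneg_left hinner (by linarith)
      _ ≤ 1 * (-κ) := by nlinarith
      _ = -κ := one_mul _
  -- lower bound
  have hlower : ∀ᶠ s in atTop, -v s ≤ ε / 2 := by
    apply trap_lemma hκpos (v := fun s => -v s) (vd := fun s => -vd s)
      (fun s (_ : s₁ ≤ s) => (hvderiv s).neg)
    intro s hs hvs
    obtain ⟨hb1, hb2, hb3⟩ := hgood s hs
    have hs0 : s ≠ 0 := by linarith
    rw [neg_le, neg_neg]
    rw [hident s hs0]
    rw [abs_le] at hb1 hb2
    have hwℓ : w s * ℓ ≤ c * ε / 8 := by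
      have h1 : |w s * ℓ| ≤ δ * (|ℓ| + 1) := by
        rw [abs_mul]
        apply mul_le_mul (abs_le.mpr hb2) (by linarith [abs_nonneg ℓ]) (abs_nonneg _)
          hδpos.le
      have := (abs_le.mp (h1.trans hδℓ)).2
      linarith
    have hqv : (2 * c + w s) * v s ≤ -(c * (ε / 2)) := by
      have h2c : 2 * c + w s ≥ c := by linarith
      have hv2 : v s ≤ -(ε / 2) := by linarith
      have hvneg : (0:ℝ) ≤ -(v s) := by linarith
      have hwc : (0:ℝ) ≤ 2 * c + w s - c := by linarith
      nlinarith [mul_nonneg hwc hvneg, mul_le_mul_of_nonneg_left hv2 hc.le]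
    have hinner : (s * H s - L) - w s * ℓ - (2 * c + w s) * v s ≥ κ := by
      simp only [hκdef]
      linarith
    calc κ = 1 * κ := (one_mul _).symm
      _ ≤ s * ((s * H s - L) - w s * ℓ - (2 * c + w s) * v s) := by nlinarith
  filter_upwards [hupper, hlower] with s h1 h2
  rw [Real.dist_eq]
  have : |v s| ≤ ε / 2 := abs_le.mpr ⟨by linarith, h1⟩
  calc |s ^ 2 * g s - ℓ| = |v s| := by rw [hvdef]
    _ ≤ ε / 2 := this
    _ < ε := by linarith
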